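/- In a weakly acyclic complete automaton with n states, if a word u has at least n occurrences of some letter a, then there exists a word u' with |u'|_b = min(n−1, |u|_b) for each letter b such that u and u' lead to the same state from the initial state. -/

import Mathlib

/-- The action of a complete deterministic semi-automaton, extended to words. -/
def run {Q A : Type*} (δ : Q → A → Q) (q : Q) (w : List A) : Q := w.foldl δ q

private lemma run_append {Q A : Type*} (δ : Q → A → Q) (q : Q) (u v : List A) :
    run δ q (u ++ v) = run δ (run δ q u) v := by
  simp [run, List.foldl_append]

private lemma run_replicate {Q A : Type*} (δ : Q → A → Q) (c : A) :
    ∀ (k : ℕ) (q : Q), run δ q (List.replicate k c) = (fun s => δ s c)^[k] q := by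
  intro k
  induction k with
  | zero => intro q; simp [run]
  | succ k ih =>
      intro q
      rw [List.replicate_succ]
      show run δ (δ q c) (List.replicate k c) = _
      rw [ih, Function.iterate_succ_apply]

private lemma run_stab {Q A : Type*} [Fintype Q] (δ : Q → A → Q)
    (hwa : ∀ (q : Q) (u v : List A) (x : A), run δ q (u ++ x :: v) = q → δ q x = q)
    (q : Q) (c : A) (k : ℕ) (hk : Fintype.card Q - 1 ≤ k) :
    run δ q (List.replicate k c) = run δ q (List.replicate (Fintype.card Q - 1) c) := by
  set n := Fintype.card Q with hn
  set f : Q → Q := fun s => δ s c with hf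
  -- pigeonhole on Fin (n+1)
  have hcard : Fintype.card Q < Fintype.card (Fin (n + 1)) := by simp [hn]
  obtain ⟨i, j, hij, heq⟩ :=
    Fintype.exists_ne_map_eq_of_card_lt (fun i : Fin (n + 1) => f^[(i : ℕ)] q) hcard
  -- get i' < j' with equal iterates
  have key : ∀ i' j' : ℕ, i' < j' → j' ≤ n → f^[i'] q = f^[j'] q →
      ∀ l, i' ≤ l → f^[l] q = f^[i'] q := by
    intro i' j' hlt hle he l hl
    have hfix : f (f^[i'] q) = f^[i'] q := by
      have hm : j' - i' = (j' - i' - 1) + 1 := by omega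
      have hrun : run δ (f^[i'] q) (List.replicate (j' - i') c) = f^[i'] q := by
        rw [run_replicate, ← Function.iterate_add_apply]
        rw [Nat.sub_add_cancel hlt.le, ← he]
      rw [hm, List.replicate_succ] at hrun
      exact hwa (f^[i'] q) [] (List.replicate (j' - i' - 1) c) c hrun
    have : f^[l - i'] (f^[i'] q) = f^[i'] q := Function.iterate_fixed hfix _
    rw [← Function.iterate_add_apply, Nat.sub_add_cancel hl] at this
    exact this
  rw [run_replicate, run_replicate]
  rcases lt_or_gt_of_ne (fun h => hij (by exact_mod_cast Fin.ext h)) with h | h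
  · have h1 := key i j h (by omega) heq
    rw [h1 k (by omega), h1 (n - 1) (by omega)]
  · have h1 := key j i h (by omega) heq.symm
    rw [h1 k (by omega), h1 (n - 1) (by omega)]

private lemma run_key {Q A : Type*} [Fintype Q] [DecidableEq A] (δ : Q → A → Q)
    (hcomm : ∀ (q : Q) (a b : A), δ (δ q a) b = δ (δ q b) a)
    (hwa : ∀ (q : Q) (u v : List A) (x : A), run δ q (u ++ x :: v) = q → δ q x = q) :
    ∀ (L : List A) (u : List A), (∀ b ∈ u, b ∈ L) → ∀ q : Q,
    ∃ u' : List A, (∀ b : A, u'.count b = min (Fintype.card Q - 1) (u.count b)) ∧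
      run δ q u' = run δ q u := by
  haveI : RightCommutative δ := ⟨fun q a b => hcomm q a b⟩
  intro L
  induction L with
  | nil =>
      intro u hu q
      have hunil : u = [] := List.eq_nil_iff_forall_not_mem.2 fun b hb => by cases hu b hb
      exact ⟨[], fun b => by simp [hunil], by rw [hunil]⟩
  | cons c L ih =>
      intro u hu q
      set n := Fintype.card Q with hn
      set k := u.count c with hk
      set k' := min (n - 1) k with hk'
      set v := u.filter (fun x => !decide (x = c)) with hv
      have hperm : (u.filter (fun x => decide (x = c)) ++ v).Perm u :=
        List.filter_append_perm _ u
      have hrep : u.filter (fun x => decide (x = c)) = List.replicate k c :=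
        List.filter_eq (l := u) c
      have hru : run δ q (List.replicate k c ++ v) = run δ q u := by
        rw [← hrep]; exact hperm.foldl_eq q
      have hstab : run δ q (List.replicate k c) = run δ q (List.replicate k' c) := by
        rcases le_or_gt k (n - 1) with h | h
        · have : k' = k := by omega
          rw [this]
        · rw [run_stab δ hwa q c k (by omega)]
          have : k' = n - 1 := by omega
          rw [this]
      set q1 := run δ q (List.replicate k' c) with hq1
      have hvL : ∀ b ∈ v, b ∈ L := by
        intro b hb
        rw [hv, List.mem_filter] at hb
        have hbne : b ≠ c := by simpa using hb.2
        rcases List.mem_cons.1 (hu b hb.1) with h | h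
        · exact absurd h hbne
        · exact h
      obtain ⟨v', hvc, hvr⟩ := ih v hvL q1
      refine ⟨List.replicate k' c ++ v', ?_, ?_⟩
      · intro b
        rw [List.count_append, List.count_replicate]
        by_cases hbc : b = c
        · subst hbc
          have hcv : v.count b = 0 := by
            rw [List.count_eq_zero]
            intro hmem
            rw [hv, List.mem_filter] at hmem
            simpa using hmem.2
          rw [hvc b, hcv]
          simp [hk', hk]
        · have hbv : v.count b = u.count b := by
            rw [hv, List.count_filter]
            simp [hbc]
          rw [hvc b, hbv]
          simp [Ne.symm hbc]
      · rw [run_append, ← hq1, hvr, ← hru, run_append, hstab]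

theorem weakly_acyclic_threshold_reduction {Q A : Type*} [Fintype Q] [DecidableEq A]
    (δ : Q → A → Q) (q0 : Q)
    (hcomm : ∀ (q : Q) (a b : A), δ (δ q a) b = δ (δ q b) a)
    (hwa : ∀ (q : Q) (u v : List A) (x : A), run δ q (u ++ x :: v) = q → δ q x = q)
    (u : List A) (a : A) (ha : Fintype.card Q ≤ u.count a) :
    ∃ u' : List A, (∀ b : A, u'.count b = min (Fintype.card Q - 1) (u.count b)) ∧
      run δ q0 u' = run δ q0 u :=
  run_key δ hcomm hwa u u (fun _ hb => hb) q0
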